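/- In the case $n = 2$ (two rows), for any three monomials $w_1,w_2,w_3$ in variables $x_1,\dots,x_m$, the identity $2[w_1w_2w_3] = [w_1w_2][w_3] + [w_1w_3][w_2] + [w_2w_3][w_1] - [w_1][w_2][w_3]$ holds. -/
import Mathlib

open MvPolynomial

/-- The polarized power sum `[w]` for `n = 2`. -/
noncomputable def pp2 (m : ℕ) (α : Fin m → ℕ) : MvPolynomial (Fin 2 × Fin m) ℂ :=
  ∑ i : Fin 2, ∏ j : Fin m, X (i, j) ^ α j

/-- the fundamental relation `Ψ₃(w₁,w₂,w₃) = 0` for `n = 2`. -/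
theorem fundamental_relation_two (m : ℕ) (a b c : Fin m → ℕ) :
    2 * pp2 m (a + b + c)
    = pp2 m (a + b) * pp2 m c + pp2 m (a + c) * pp2 m b + pp2 m (b + c) * pp2 m a
      - pp2 m a * pp2 m b * pp2 m c := by
  simp only [pp2, Fin.sum_univ_two, Pi.add_apply, pow_add, Finset.prod_mul_distrib]
  ring
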